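/- Let Γ = {a₁, …, a_k} and let b, c be two symbols not in Γ; for a DA expression e over Γ let e' over {b,c} be obtained by replacing every occurrence of aᵢ by b(c ∩ c^{i+1})b. For every finite structure K over Γ there exists a finite structure J over {b, c} such that e(K) = e'(J) for every DA expression e over Γ. (Such a J is obtained by replacing, for each i and each pair (x,y) ∈ aᵢ^K, the edge by fresh distinct elements u₁, …, u_{i+2} disjoint from the active domain of K and from other such sets, with b-edges x → u₁ and u_{i+2} → y, and c-edges forming the chain u₁ → u₂ → ⋯ → u_{i+2} together with the shortcut edge u₁ → u_{i+2}.) -/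
import Mathlib


/-- Syntax of the Downward Algebra (DA): expressions built from relation names
in a vocabulary `Γ` using union, intersection, difference, and composition. -/
inductive DA (Γ : Type) : Type where
  | var : Γ → DA Γ
  | union : DA Γ → DA Γ → DA Γ
  | inter : DA Γ → DA Γ → DA Γ
  | diff : DA Γ → DA Γ → DA Γ
  | comp : DA Γ → DA Γ → DA Γ

namespace DA

/-- Semantics: the binary relation `e(I)` defined by expression `e` in a structure `I`
(a structure over `Γ` with domain `D` assigns a binary relation on `D` to each name). -/
def eval {Γ D : Type} (I : Γ → D → D → Prop) : DA Γ → D → D → Prop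
  | .var a => I a
  | .union e f => fun x y => eval I e x y ∨ eval I f x y
  | .inter e f => fun x y => eval I e x y ∧ eval I f x y
  | .diff e f => fun x y => eval I e x y ∧ ¬ eval I f x y
  | .comp e f => fun x y => ∃ z, eval I e x z ∧ eval I f z y

/-- The difference degree of an expression. -/
def deg {Γ : Type} : DA Γ → ℕ
  | .var _ => 0
  | .union e f => max (deg e) (deg f)
  | .inter e f => max (deg e) (deg f)
  | .diff e f => max (deg e) (deg f) + 1
  | .comp e f => max (deg e) (deg f)

/-- A structure is finite when each relation is a finite binary relation. -/
def FiniteStruct {Γ D : Type} (I : Γ → D → D → Prop) : Prop :=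
  ∀ a, {p : D × D | I a p.1 p.2}.Finite

/-- An expression is finitely satisfiable if some finite structure makes it
evaluate to a nonempty relation. -/
def FinSat {Γ : Type} (e : DA Γ) : Prop :=
  ∃ (D : Type) (I : Γ → D → D → Prop), FiniteStruct I ∧ ∃ x y, eval I e x y

end DA

namespace DA

/-- Substituting an expression for each relation name. -/
def subst {Γ Δ : Type} (σ : Γ → DA Δ) : DA Γ → DA Δ
  | .var a => σ a
  | .union e f => .union (subst σ e) (subst σ f)
  | .inter e f => .inter (subst σ e) (subst σ f)
  | .diff e f => .diff (subst σ e) (subst σ f)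
  | .comp e f => .comp (subst σ e) (subst σ f)

/-- pow1 e n is the (n+1)-fold composition e ⋯ e, i.e. e^(n+1). -/
def pow1 {Γ : Type} (e : DA Γ) : ℕ → DA Γ
  | 0 => e
  | n + 1 => .comp e (pow1 e n)

end DA

/-- The vocabulary with two relation names b and c. -/
inductive BC : Type where
  | b : BC
  | c : BC

/-- The substitution sending the i-th relation name aᵢ of Γ = {a₁, …, a_k}
(so i = j + 1 for the zero-based index j : Fin k) to b(c ∩ c^(i+1))b. -/
def sigmaBC (k : ℕ) : Fin k → DA BC := fun j =>
  .comp (.var .b)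
    (.comp (.inter (.var .c) (DA.pow1 (.var .c) (j.val + 1)))
           (.var .b))

namespace Stmt7Aux

variable {k : ℕ} {D : Type}

abbrev Dom (k : ℕ) (D : Type) : Type := D ⊕ (Fin k × D × D × ℕ)

def N (i : Fin k) (x y : D) (m : ℕ) : Dom k D := Sum.inr (i, x, y, m)

def Jstr (K : Fin k → D → D → Prop) : BC → Dom k D → Dom k D → Prop
  | .b => fun p q =>
      (∃ i x y, K i x y ∧ p = Sum.inl x ∧ q = N i x y 0) ∨
      (∃ i x y, K i x y ∧ p = N i x y (i.val + 2) ∧ q = Sum.inl y)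
  | .c => fun p q =>
      ∃ i x y, K i x y ∧
        ((∃ m, m + 1 ≤ i.val + 2 ∧ p = N i x y m ∧ q = N i x y (m + 1)) ∨
         (p = N i x y 0 ∧ q = N i x y (i.val + 2)))

lemma N_eq_iff {i i' : Fin k} {x x' y y' : D} {m m' : ℕ} :
    (N i x y m : Dom k D) = N i' x' y' m' ↔ (i = i' ∧ x = x' ∧ y = y' ∧ m = m') := by
  simp [N]

lemma path_iff (K : Fin k → D → D → Prop) (n : ℕ) :
    ∀ p q : Dom k D,
    DA.eval (Jstr K) (DA.pow1 (.var .c) n) p q ↔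
      ∃ i x y, K i x y ∧
        ((∃ m, m + (n + 1) ≤ i.val + 2 ∧ p = N i x y m ∧ q = N i x y (m + (n + 1))) ∨
         (n = 0 ∧ p = N i x y 0 ∧ q = N i x y (i.val + 2))) := by
  induction n with
  | zero =>
    intro p q
    show Jstr K .c p q ↔ _
    simp [Jstr]
  | succ n ih =>
    intro p q
    show (∃ z, Jstr K .c p z ∧ DA.eval (Jstr K) (DA.pow1 (.var .c) n) z q) ↔ _
    constructor
    · rintro ⟨z, ⟨i, x, y, hK, hcase⟩, hzq⟩
      rw [ih] at hzq
      obtain ⟨i', x', y', hK', hcase'⟩ := hzq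
      rcases hcase with ⟨m, hm, hp, hz⟩ | ⟨hp, hz⟩ <;>
        rcases hcase' with ⟨m', hm', hz', hq⟩ | ⟨hn, hz', hq⟩ <;>
        rw [hz] at hz'
      · obtain ⟨rfl, rfl, rfl, hmm⟩ := N_eq_iff.mp hz'
        refine ⟨i, x, y, hK, Or.inl ⟨m, by omega, hp, ?_⟩⟩
        rw [hq]
        have : m' + (n + 1) = m + (n + 1 + 1) := by omega
        rw [this]
      · obtain ⟨rfl, rfl, rfl, hmm⟩ := N_eq_iff.mp hz'
        omega
      · obtain ⟨rfl, rfl, rfl, hmm⟩ := N_eq_iff.mp hz'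
        omega
      · obtain ⟨rfl, rfl, rfl, hmm⟩ := N_eq_iff.mp hz'
        omega
    · rintro ⟨i, x, y, hK, hcase⟩
      rcases hcase with ⟨m, hm, hp, hq⟩ | ⟨hn, _, _⟩
      · refine ⟨N i x y (m + 1), ⟨i, x, y, hK, Or.inl ⟨m, by omega, hp, rfl⟩⟩, ?_⟩
        rw [ih]
        refine ⟨i, x, y, hK, Or.inl ⟨m + 1, by omega, rfl, ?_⟩⟩
        rw [hq]
        have : m + (n + 1 + 1) = m + 1 + (n + 1) := by omega
        rw [this]
      · omega

lemma inner_iff (K : Fin k → D → D → Prop) (j : Fin k) (p q : Dom k D) :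
    DA.eval (Jstr K) (.inter (.var .c) (DA.pow1 (.var .c) (j.val + 1))) p q ↔
      ∃ x y, K j x y ∧ p = N j x y 0 ∧ q = N j x y (j.val + 2) := by
  constructor
  · rintro ⟨hc, hpath⟩
    rw [path_iff] at hpath
    obtain ⟨i, x, y, hK, hcase⟩ := hpath
    rcases hcase with ⟨m, hm, hp, hq⟩ | ⟨hn, hp, hq⟩
    · obtain ⟨i', x', y', hK', hc'⟩ := hc
      rcases hc' with ⟨m', hm', hp', hq'⟩ | ⟨hp', hq'⟩ <;> rw [hp] at hp' <;> rw [hq] at hq'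
      · obtain ⟨rfl, rfl, rfl, h1⟩ := N_eq_iff.mp hp'
        obtain ⟨_, _, _, h2⟩ := N_eq_iff.mp hq'
        omega
      · obtain ⟨rfl, rfl, rfl, h1⟩ := N_eq_iff.mp hp'
        obtain ⟨_, _, _, h2⟩ := N_eq_iff.mp hq'
        have hij : i = j := Fin.ext (by omega)
        subst hij
        refine ⟨x, y, hK, by rw [hp, h1], ?_⟩
        have : m + (i.val + 1 + 1) = i.val + 2 := by omega
        rw [hq, this]
    · omega
  · rintro ⟨x, y, hK, hp, hq⟩
    refine ⟨⟨j, x, y, hK, Or.inr ⟨hp, hq⟩⟩, ?_⟩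
    rw [path_iff]
    refine ⟨j, x, y, hK, Or.inl ⟨0, by omega, hp, ?_⟩⟩
    have : (0 : ℕ) + (j.val + 1 + 1) = j.val + 2 := by omega
    rw [this]
    exact hq

lemma var_iff (K : Fin k → D → D → Prop) (j : Fin k) (p q : Dom k D) :
    DA.eval (Jstr K) (sigmaBC k j) p q ↔
      ∃ x y, p = Sum.inl x ∧ q = Sum.inl y ∧ K j x y := by
  show (∃ z, Jstr K .b p z ∧ ∃ w,
      DA.eval (Jstr K) (.inter (.var .c) (DA.pow1 (.var .c) (j.val + 1))) z w ∧
      Jstr K .b w q) ↔ _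
  constructor
  · rintro ⟨z, hbz, w, hzw, hbq⟩
    rw [inner_iff] at hzw
    obtain ⟨x, y, hK, hz, hw⟩ := hzw
    rcases hbz with ⟨i', x', y', hK', hp, hz'⟩ | ⟨i', x', y', hK', hp, hz'⟩
    · rw [hz] at hz'
      obtain ⟨rfl, rfl, rfl, -⟩ := N_eq_iff.mp hz'
      rcases hbq with ⟨i'', x'', y'', hK'', hw', hq⟩ | ⟨i'', x'', y'', hK'', hw', hq⟩
      · rw [hw] at hw'
        exact absurd hw' (by simp [N])
      · rw [hw] at hw'
        obtain ⟨rfl, rfl, rfl, -⟩ := N_eq_iff.mp hw'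
        exact ⟨x, y, hp, hq, hK⟩
    · rw [hz] at hz'
      exact absurd hz' (by simp [N])
  · rintro ⟨x, y, hp, hq, hK⟩
    refine ⟨N j x y 0, Or.inl ⟨j, x, y, hK, hp, rfl⟩, N j x y (j.val + 2), ?_, ?_⟩
    · rw [inner_iff]; exact ⟨x, y, hK, rfl, rfl⟩
    · exact Or.inr ⟨j, x, y, hK, rfl, hq⟩

lemma Jstr_finite (K : Fin k → D → D → Prop) (hK : DA.FiniteStruct K) :
    DA.FiniteStruct (Jstr K) := by
  intro a
  cases a with
  | b =>
    apply Set.Finite.subset (Set.Finite.union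
      (Set.finite_iUnion (fun i : Fin k =>
        ((hK i).image (fun xy => ((Sum.inl xy.1 : Dom k D), N i xy.1 xy.2 0)))))
      (Set.finite_iUnion (fun i : Fin k =>
        ((hK i).image (fun xy => (N i xy.1 xy.2 (i.val + 2), (Sum.inl xy.2 : Dom k D)))))))
    rintro ⟨p, q⟩ h
    rcases h with ⟨i, x, y, hK', hp, hq⟩ | ⟨i, x, y, hK', hp, hq⟩
    · exact Or.inl (Set.mem_iUnion.mpr ⟨i, ⟨(x, y), hK', Prod.ext hp.symm hq.symm⟩⟩)
    · exact Or.inr (Set.mem_iUnion.mpr ⟨i, ⟨(x, y), hK', Prod.ext hp.symm hq.symm⟩⟩)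
  | c =>
    apply Set.Finite.subset (Set.Finite.union
      (Set.finite_iUnion (fun i : Fin k =>
        (((hK i).prod (Set.finite_Iic (i.val + 2))).image
          (fun z : (D × D) × ℕ => (N i z.1.1 z.1.2 z.2, N i z.1.1 z.1.2 (z.2 + 1))))))
      (Set.finite_iUnion (fun i : Fin k =>
        ((hK i).image (fun xy => (N i xy.1 xy.2 0, N i xy.1 xy.2 (i.val + 2)))))))
    rintro ⟨p, q⟩ h
    obtain ⟨i, x, y, hK', hcase⟩ := h
    rcases hcase with ⟨m, hm, hp, hq⟩ | ⟨hp, hq⟩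
    · exact Or.inl (Set.mem_iUnion.mpr ⟨i,
        ⟨((x, y), m), ⟨hK', Set.mem_Iic.mpr (by omega)⟩, Prod.ext hp.symm hq.symm⟩⟩)
    · exact Or.inr (Set.mem_iUnion.mpr ⟨i, ⟨(x, y), hK', Prod.ext hp.symm hq.symm⟩⟩)

end Stmt7Aux

/-- For every finite structure K over Γ = {a₁, …, a_k} there is a finite structure J
over {b,c} (on a domain extending that of K along an injection ι, obtained by replacing
each aᵢ-edge (x,y) by a fresh b(c ∩ c^(i+1))b-gadget) such that e(K) = e\´(J) for every
DA expression e over Γ: the pairs in e\´(J) are exactly the ι-images of the pairs in e(K). -/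


theorem stmt7 (k : ℕ) (D : Type) (K : Fin k → D → D → Prop)
    (hK : DA.FiniteStruct K) :
    ∃ (D' : Type) (ι : D → D') (J : BC → D' → D' → Prop),
      Function.Injective ι ∧ DA.FiniteStruct J ∧
      ∀ (e : DA (Fin k)) (p q : D'),
        DA.eval J (DA.subst (sigmaBC k) e) p q ↔
          ∃ x y : D, p = ι x ∧ q = ι y ∧ DA.eval K e x y := by
  refine ⟨Stmt7Aux.Dom k D, Sum.inl, Stmt7Aux.Jstr K, Sum.inl_injective,
    Stmt7Aux.Jstr_finite K hK, ?_⟩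
  intro e
  induction e with
  | var j =>
    intro p q
    exact Stmt7Aux.var_iff K j p q
  | union e f ihe ihf =>
    intro p q
    show DA.eval _ (.union (DA.subst (sigmaBC k) e) (DA.subst (sigmaBC k) f)) p q ↔ _
    constructor
    · rintro (h | h)
      · obtain ⟨x, y, hp, hq, h⟩ := (ihe p q).mp h
        exact ⟨x, y, hp, hq, Or.inl h⟩
      · obtain ⟨x, y, hp, hq, h⟩ := (ihf p q).mp h
        exact ⟨x, y, hp, hq, Or.inr h⟩
    · rintro ⟨x, y, hp, hq, h | h⟩
      · exact Or.inl ((ihe p q).mpr ⟨x, y, hp, hq, h⟩)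
      · exact Or.inr ((ihf p q).mpr ⟨x, y, hp, hq, h⟩)
  | inter e f ihe ihf =>
    intro p q
    show DA.eval _ (.inter (DA.subst (sigmaBC k) e) (DA.subst (sigmaBC k) f)) p q ↔ _
    constructor
    · rintro ⟨h1, h2⟩
      obtain ⟨x, y, hp, hq, h1'⟩ := (ihe p q).mp h1
      obtain ⟨x', y', hp', hq', h2'⟩ := (ihf p q).mp h2
      obtain rfl : x = x' := Sum.inl.inj (hp.symm.trans hp')
      obtain rfl : y = y' := Sum.inl.inj (hq.symm.trans hq')
      exact ⟨x, y, hp, hq, h1', h2'⟩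
    · rintro ⟨x, y, hp, hq, h1, h2⟩
      exact ⟨(ihe p q).mpr ⟨x, y, hp, hq, h1⟩, (ihf p q).mpr ⟨x, y, hp, hq, h2⟩⟩
  | diff e f ihe ihf =>
    intro p q
    show DA.eval _ (.diff (DA.subst (sigmaBC k) e) (DA.subst (sigmaBC k) f)) p q ↔ _
    constructor
    · rintro ⟨h1, h2⟩
      obtain ⟨x, y, hp, hq, h1'⟩ := (ihe p q).mp h1
      refine ⟨x, y, hp, hq, h1', fun hf => h2 ?_⟩
      exact (ihf p q).mpr ⟨x, y, hp, hq, hf⟩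
    · rintro ⟨x, y, hp, hq, h1, h2⟩
      refine ⟨(ihe p q).mpr ⟨x, y, hp, hq, h1⟩, fun hf => h2 ?_⟩
      obtain ⟨x', y', hp', hq', hf'⟩ := (ihf p q).mp hf
      obtain rfl : x = x' := Sum.inl.inj (hp.symm.trans hp')
      obtain rfl : y = y' := Sum.inl.inj (hq.symm.trans hq')
      exact hf'
  | comp e f ihe ihf =>
    intro p q
    show DA.eval _ (.comp (DA.subst (sigmaBC k) e) (DA.subst (sigmaBC k) f)) p q ↔ _
    constructor
    · rintro ⟨z, h1, h2⟩
      obtain ⟨x, w, hp, hz, h1'⟩ := (ihe p z).mp h1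
      obtain ⟨w', y, hz', hq, h2'⟩ := (ihf z q).mp h2
      obtain rfl : w = w' := Sum.inl.inj (hz.symm.trans hz')
      exact ⟨x, y, hp, hq, w, h1', h2'⟩
    · rintro ⟨x, y, hp, hq, w, h1, h2⟩
      exact ⟨Sum.inl w, (ihe p (Sum.inl w)).mpr ⟨x, w, hp, rfl, h1⟩,
        (ihf (Sum.inl w) q).mpr ⟨w, y, rfl, hq, h2⟩⟩
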